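/- For integers a, b with a ≠ 0 and b ≥ 0, the function d(x₁, x₂) = a²(x₁² + x₂²) − 2b(x₁ − x₂)² on ℤ² ∖ {0} attains its minimum at (1, 0) (i.e., d(x₁,x₂) ≥ a² − 2b for all nonzero (x₁,x₂) ∈ ℤ²) if and only if a² ≥ 6b. -/
import Mathlib


theorem stmt_4 (a b : ℤ) (ha : a ≠ 0) (hb : 0 ≤ b) (hdisc : a ^ 2 - 4 * b > 0) :
    (∀ x₁ x₂ : ℤ, ¬(x₁ = 0 ∧ x₂ = 0) →
        a ^ 2 * (x₁ ^ 2 + x₂ ^ 2) - 2 * b * (x₁ - x₂) ^ 2 ≥ a ^ 2 - 2 * b) ↔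
      a ^ 2 ≥ 6 * b := by
  constructor
  · intro h
    have := h 1 (-1) (by simp)
    norm_num at this
    linarith
  · intro h6 x₁ x₂ hx
    have hf : x₁ ^ 2 + x₁ * x₂ + x₂ ^ 2 ≥ 1 := by
      have hpos : 0 < x₁ ^ 2 + x₁ * x₂ + x₂ ^ 2 := by
        rcases eq_or_ne x₂ 0 with h2 | h2
        · have h1 : x₁ ≠ 0 := fun h1 => hx ⟨h1, h2⟩
          have : 1 ≤ x₁ ^ 2 := by
            have : 0 < x₁ ^ 2 := by positivity
            omega
          subst h2; nlinarith
        · have : 1 ≤ x₂ ^ 2 := by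
            have : 0 < x₂ ^ 2 := by positivity
            omega
          nlinarith [sq_nonneg (2 * x₁ + x₂)]
      omega
    have hs : x₁ ^ 2 + x₂ ^ 2 ≥ 1 := by nlinarith [sq_nonneg (x₁ + x₂)]
    have h2 : x₁ ^ 2 + x₂ ^ 2 + (x₁ + x₂) ^ 2 ≥ 2 := by nlinarith
    nlinarith [mul_nonneg (sub_nonneg.2 h6) (sub_nonneg.2 hs),
      mul_nonneg hb (by linarith : (0:ℤ) ≤ x₁ ^ 2 + x₂ ^ 2 + (x₁ + x₂) ^ 2 - 2)]
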